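/- arXiv:1402.6074 — 3 statements merged into one kernel-verified Lean document; each statement's English description precedes it below -/
import Mathlib

section
/- Let p ≥ 7 be an odd prime. For all integers i ≥ 2 and k ≥ 0 with i + k ≤ p, the congruence 2(k + 2i − 2)p − 2k − 1 ≡ 4p − 3 (mod 2p² − 2p − 2) holds if and only if k = 2 and 2i = p + 1. -/
/-- For p ≥ 7 odd prime: for i ≥ 2, k ≥ 0 with i + k ≤ p, the congruence
2(k + 2i − 2)p − 2k − 1 ≡ 4p − 3 (mod 2p² − 2p − 2) holds iff k = 2 and 2i = p + 1. -/
theorem stmt_6 (p : ℕ) (hp : Nat.Prime p) (hodd : Odd p) (hp7 : 7 ≤ p) :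
    ∀ i k : ℤ, 2 ≤ i → 0 ≤ k → i + k ≤ (p : ℤ) →
      ((2 * (k + 2 * i - 2) * (p : ℤ) - 2 * k - 1 ≡ 4 * (p : ℤ) - 3
          [ZMOD 2 * (p : ℤ) ^ 2 - 2 * (p : ℤ) - 2]) ↔
        (k = 2 ∧ 2 * i = (p : ℤ) + 1)) := by
  intro i k h2 hk hik
  have hp' : (7 : ℤ) ≤ (p : ℤ) := by exact_mod_cast hp7
  rw [Int.modEq_iff_dvd]
  constructor
  · rintro ⟨t, ht⟩
    have hn : (0 : ℤ) < 2 * (p : ℤ) ^ 2 - 2 * (p : ℤ) - 2 := by nlinarith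
    -- t ≤ 0
    have hm0 : (0 : ℤ) ≤ (p : ℤ) * (k + 2 * i - 4) :=
      mul_nonneg (by linarith) (by linarith)
    have ht0 : t ≤ 0 := by
      by_contra h
      push_neg at h
      have h1 : (2 * (p : ℤ) ^ 2 - 2 * (p : ℤ) - 2) * 1 ≤
          (2 * (p : ℤ) ^ 2 - 2 * (p : ℤ) - 2) * t :=
        mul_le_mul_of_nonneg_left (by omega) (by linarith)
      nlinarith
    -- t ≥ -1
    have hub : (p : ℤ) * (k + 2 * i - 4) ≤ (p : ℤ) * (2 * (p : ℤ) - 4) :=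
      mul_le_mul_of_nonneg_left (by linarith) (by linarith)
    have ht1 : -1 ≤ t := by
      by_contra h
      push_neg at h
      have h1 : (2 * (p : ℤ) ^ 2 - 2 * (p : ℤ) - 2) * t ≤
          (2 * (p : ℤ) ^ 2 - 2 * (p : ℤ) - 2) * (-2) :=
        mul_le_mul_of_nonneg_left (by omega) (by linarith)
      nlinarith
    interval_cases t
    · -- t = -1 : the genuine solution
      have key2 : 2 * ((p : ℤ) * (k + 2 * i - 4 - (p : ℤ) + 1)) = 2 * (k - 2) := by
        linear_combination -ht
      have key : (p : ℤ) * (k + 2 * i - 4 - (p : ℤ) + 1) = k - 2 := by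
        have := mul_left_cancel₀ (two_ne_zero (α := ℤ)) key2
        exact this
      have hmle : k + 2 * i - 4 - (p : ℤ) + 1 ≤ 0 := by
        by_contra h
        push_neg at h
        have : (p : ℤ) * 1 ≤ (p : ℤ) * (k + 2 * i - 4 - (p : ℤ) + 1) :=
          mul_le_mul_of_nonneg_left (by omega) (by linarith)
        linarith
      have hmge : 0 ≤ k + 2 * i - 4 - (p : ℤ) + 1 := by
        by_contra h
        push_neg at h
        have : (p : ℤ) * (k + 2 * i - 4 - (p : ℤ) + 1) ≤ (p : ℤ) * (-1) :=
          mul_le_mul_of_nonneg_left (by omega) (by linarith)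
        linarith
      have hm : k + 2 * i - 4 - (p : ℤ) + 1 = 0 := le_antisymm hmle hmge
      have hk2 : k = 2 := by
        have : (p : ℤ) * 0 = k - 2 := by rw [← hm]; exact key
        linarith
      exact ⟨hk2, by linarith⟩
    · -- t = 0 : impossible
      exfalso
      have key2 : 2 * ((p : ℤ) * (k + 2 * i - 4)) = 2 * (k - 1) := by
        linear_combination -ht
      have key : (p : ℤ) * (k + 2 * i - 4) = k - 1 :=
        mul_left_cancel₀ (two_ne_zero (α := ℤ)) key2
      have hmle : k + 2 * i - 4 ≤ 0 := by
        by_contra h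
        push_neg at h
        have : (p : ℤ) * 1 ≤ (p : ℤ) * (k + 2 * i - 4) :=
          mul_le_mul_of_nonneg_left (by omega) (by linarith)
        linarith
      have hm : k + 2 * i - 4 = 0 := by omega
      have hk1 : k = 1 := by
        have : (p : ℤ) * 0 = k - 1 := by rw [← hm]; exact key
        linarith
      omega
  · rintro ⟨hk2, hi⟩
    subst hk2
    exact ⟨-1, by linear_combination (-2 * (p : ℤ)) * hi⟩
end

section
/- Let p ≥ 7 be an odd prime. For all integers i ≥ 2 and k ≥ 0 with i + k ≤ p, the congruence 2(k + 2i − 1)p − 2(k + 1) ≡ 2p (mod 2p² − 2p − 2) holds if and only if k = 0 and 2i = p + 1. -/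
/-- For p ≥ 7 odd prime: for i ≥ 2, k ≥ 0 with i + k ≤ p, the congruence
2(k + 2i − 1)p − 2(k + 1) ≡ 2p (mod 2p² − 2p − 2) holds iff k = 0 and 2i = p + 1. -/
theorem stmt_8 (p : ℕ) (hp : Nat.Prime p) (hodd : Odd p) (hp7 : 7 ≤ p) :
    ∀ i k : ℤ, 2 ≤ i → 0 ≤ k → i + k ≤ (p : ℤ) →
      ((2 * (k + 2 * i - 1) * (p : ℤ) - 2 * (k + 1) ≡ 2 * (p : ℤ)
          [ZMOD 2 * (p : ℤ) ^ 2 - 2 * (p : ℤ) - 2]) ↔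
        (k = 0 ∧ 2 * i = (p : ℤ) + 1)) := by
  intro i k hi hk hik
  set P : ℤ := (p : ℤ) with hPdef
  have hP : (7 : ℤ) ≤ P := by show (7:ℤ) ≤ (p:ℤ); exact_mod_cast hp7
  constructor
  · intro h
    obtain ⟨c, hc⟩ := Int.ModEq.dvd h
    -- hc : 2*(k+2*i-1)*P - 2*(k+1) - 2*P = (2*P^2-2*P-2) * c
    have hiP : i ≤ P := by linarith
    have hkP : k ≤ P - 2 := by linarith
    -- E := 2*(k+2*i-2)*P - 2*(k+1), 0 < E ≤ 2N+2
    have hEpos : 0 < 2 * (k + 2 * i - 2) * P - 2 * (k + 1) := by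
      nlinarith [mul_nonneg (by linarith : (0:ℤ) ≤ i - 2) (by linarith : (0:ℤ) ≤ P),
        mul_nonneg hk (by linarith : (0:ℤ) ≤ P - 1)]
    have hEub : 2 * (k + 2 * i - 2) * P - 2 * (k + 1) ≤ 4 * P ^ 2 - 4 * P - 2 := by
      nlinarith [mul_le_mul_of_nonneg_right (show k + 2 * i - 2 ≤ 2 * P - 2 by linarith)
        (show (0:ℤ) ≤ P by linarith)]
    have hNpos : (0:ℤ) < 2 * P ^ 2 - 2 * P - 2 := by nlinarith
    have hc1 : c = -1 ∨ c = -2 := by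
      have h0 : c < 0 := by
        by_contra hcon
        push_neg at hcon
        nlinarith [mul_nonneg hNpos.le hcon]
      have h3 : -3 < c := by
        by_contra hcon
        push_neg at hcon
        nlinarith [mul_le_mul_of_nonneg_left hcon hNpos.le]
      omega
    rcases hc1 with rfl | rfl
    · -- E = N : P*(k+2i-1-P) = k
      have hd2 : 2 * (P * (k + 2 * i - 1 - P)) = 2 * k := by linear_combination -hc
      have hd : P * (k + 2 * i - 1 - P) = k :=
        mul_left_cancel₀ (two_ne_zero) hd2
      have hm : k + 2 * i - 1 - P = 0 := by
        rcases lt_trichotomy (k + 2 * i - 1 - P) 0 with hlt | heq | hgt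
        · exfalso
          nlinarith [mul_le_mul_of_nonneg_left (show k + 2 * i - 1 - P ≤ -1 by omega)
            (show (0:ℤ) ≤ P by linarith)]
        · exact heq
        · exfalso
          nlinarith [mul_le_mul_of_nonneg_left (show (1:ℤ) ≤ k + 2 * i - 1 - P by omega)
            (show (0:ℤ) ≤ P by linarith)]
      rw [hm, mul_zero] at hd
      constructor
      · omega
      · omega
    · -- E = 2N : P*(k+2i-2P) = k - 1, forces k=1, parity contradiction
      exfalso
      have hd2 : 2 * (P * (k + 2 * i - 2 * P)) = 2 * (k - 1) := by linear_combination -hc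
      have hd : P * (k + 2 * i - 2 * P) = k - 1 :=
        mul_left_cancel₀ (two_ne_zero) hd2
      have hm : k + 2 * i - 2 * P = 0 := by
        rcases lt_trichotomy (k + 2 * i - 2 * P) 0 with hlt | heq | hgt
        · exfalso
          nlinarith [mul_le_mul_of_nonneg_left (show k + 2 * i - 2 * P ≤ -1 by omega)
            (show (0:ℤ) ≤ P by linarith)]
        · exact heq
        · exfalso
          nlinarith [mul_le_mul_of_nonneg_left (show (1:ℤ) ≤ k + 2 * i - 2 * P by omega)
            (show (0:ℤ) ≤ P by linarith)]
      rw [hm, mul_zero] at hd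
      -- k = 1, and hm : 1 + 2i = 2P, contradiction mod 2
      omega
  · rintro ⟨rfl, hi0⟩
    rw [Int.modEq_iff_dvd]
    exact ⟨-1, by linear_combination (-2 * P) * hi0⟩
end

section
/- Let p ≥ 7 be an odd prime. For all integers j, k with 0 ≤ j ≤ p − 1 and 1 ≤ k ≤ p − 1, the congruence 2(j + k)p + 2(j − k) ≡ 2p (mod 2p² − 2p − 2) holds if and only if j = (p − 1)/2 and k = (p + 1)/2. -/
/-- For p ≥ 7 odd prime: for 0 ≤ j ≤ p − 1 and 1 ≤ k ≤ p − 1, the congruence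
2(j + k)p + 2(j − k) ≡ 2p (mod 2p² − 2p − 2) holds iff j = (p − 1)/2 and k = (p + 1)/2. -/
theorem stmt_12 (p : ℕ) (hp : Nat.Prime p) (hodd : Odd p) (hp7 : 7 ≤ p) :
    ∀ j k : ℤ, 0 ≤ j → j ≤ (p : ℤ) - 1 → 1 ≤ k → k ≤ (p : ℤ) - 1 →
      ((2 * (j + k) * (p : ℤ) + 2 * (j - k) ≡ 2 * (p : ℤ)
          [ZMOD 2 * (p : ℤ) ^ 2 - 2 * (p : ℤ) - 2]) ↔
        (j = ((p : ℤ) - 1) / 2 ∧ k = ((p : ℤ) + 1) / 2)) := by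
  intro j k hj0 hj1 hk1 hk2
  have hp0 : (7:ℤ) ≤ (p:ℤ) := by exact_mod_cast hp7
  obtain ⟨m, hm⟩ := hodd
  have hm' : (p:ℤ) = 2*(m:ℤ)+1 := by exact_mod_cast hm
  constructor
  · intro h
    obtain ⟨t, ht⟩ := (Int.modEq_iff_dvd.mp h)
    have hM : (0:ℤ) < 2*(p:ℤ)^2-2*(p:ℤ)-2 := by nlinarith
    have ht0 : t ≤ 0 := by
      by_contra hcon
      push_neg at hcon
      nlinarith [mul_nonneg (by linarith : (0:ℤ) ≤ t - 1) (le_of_lt hM),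
        mul_nonneg (by linarith : (0:ℤ) ≤ j + k - 1) (by linarith : (0:ℤ) ≤ (p:ℤ)),
        mul_nonneg (by linarith : (0:ℤ) ≤ (p:ℤ) - 2) (by linarith : (0:ℤ) ≤ (p:ℤ))]
    have ht2 : -2 ≤ t := by
      by_contra hcon
      push_neg at hcon
      nlinarith [mul_nonneg (by linarith : (0:ℤ) ≤ -t - 3) (le_of_lt hM),
        mul_nonneg (by linarith : (0:ℤ) ≤ 2*(p:ℤ) - 2 - j - k) (by linarith : (0:ℤ) ≤ (p:ℤ)),
        mul_nonneg (by linarith : (0:ℤ) ≤ (p:ℤ) - 2) (by linarith : (0:ℤ) ≤ (p:ℤ))]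
    interval_cases t
    · -- t = -2 : contradiction
      exfalso
      nlinarith [mul_nonneg (by linarith : (0:ℤ) ≤ (p:ℤ) - 1 - j) (by linarith : (0:ℤ) ≤ (p:ℤ)),
        mul_nonneg (by linarith : (0:ℤ) ≤ (p:ℤ) - 1 - k) (by linarith : (0:ℤ) ≤ (p:ℤ))]
    · -- t = -1
      have key : j - k + 1 = (p:ℤ) * ((p:ℤ) - j - k) := by
        have h2 : 2*(j - k + 1) = 2*((p:ℤ) * ((p:ℤ) - j - k)) := by linear_combination -ht
        exact mul_left_cancel₀ two_ne_zero h2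
      have h5 : (p:ℤ) - j - k = 0 := by
        rcases lt_trichotomy ((p:ℤ) - j - k) 0 with hx | hx | hx
        · exfalso
          nlinarith [mul_nonneg (by linarith : (0:ℤ) ≤ (p:ℤ)) (by linarith : (0:ℤ) ≤ -1 - ((p:ℤ) - j - k))]
        · exact hx
        · exfalso
          nlinarith [mul_nonneg (by linarith : (0:ℤ) ≤ (p:ℤ)) (by linarith : (0:ℤ) ≤ ((p:ℤ) - j - k) - 1)]
      rw [h5, mul_zero] at key
      omega
    · -- t = 0 : contradiction
      exfalso
      by_cases hjk : j + k = 1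
      · have : j = 0 ∧ k = 1 := by omega
        obtain ⟨rfl, rfl⟩ := this
        linarith [ht]
      · nlinarith [mul_nonneg (by omega : (0:ℤ) ≤ j + k - 2) (by linarith : (0:ℤ) ≤ (p:ℤ))]
  · rintro ⟨hj, hk⟩
    have A : j + k = (p:ℤ) := by omega
    have B : j - k = -1 := by omega
    exact Int.modEq_iff_dvd.mpr ⟨-1, by linear_combination (-2*(p:ℤ))*A - 2*B⟩
end
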